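/- arXiv:1707.03814 — 3 statements merged into one kernel-verified Lean document; each statement's English description precedes it below -/
import Mathlib

section
/- A subset S ⊆ 𝕊 is closed in the pcfb-topology if and only if the following holds: for every supernatural number s, if for every positive natural number n with n ∣ s there exists x ∈ S with n ∣ x and x ∣ s, then s ∈ S. -/
open Topology

/-- A supernatural number: a function from the set of primes to `ℕ∞ = ℕ ∪ {∞}`,
thought of as the formal product `∏ p ^ (s p)`. -/
def Supernatural : Type := Nat.Primes → ℕ∞

/-- Divisibility of supernatural numbers: `s ∣ t` iff `s p ≤ t p` for every prime `p`. -/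
instance : Dvd Supernatural := ⟨fun s t => ∀ p, s p ≤ t p⟩

/-- The supernatural number associated to a positive natural number,
given by its prime factorization. -/
def natToSuper (n : ℕ+) : Supernatural := fun p => ((n : ℕ).factorization p : ℕ∞)

/-- The pcfb-topology on `𝕊`, generated by the sets `{x | n ∣ x ∧ x ∣ s}`
for `n` a positive natural number and `s` a supernatural number. -/
def pcfbTopology : TopologicalSpace Supernatural :=
  .generateFrom {U | ∃ (n : ℕ+) (t : Supernatural), U = {x | natToSuper n ∣ x ∧ x ∣ t}}

lemma natToSuper_lcm_dvd (n m : ℕ+) (x : Supernatural) :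
    natToSuper (n.lcm m) ∣ x ↔ natToSuper n ∣ x ∧ natToSuper m ∣ x := by
  constructor
  · intro h
    constructor <;> intro p <;> refine le_trans ?_ (h p) <;>
    · show ((_ : ℕ) : ℕ∞) ≤ ((_ : ℕ) : ℕ∞)
      rw [Nat.cast_le, PNat.lcm_coe, Nat.factorization_lcm n.ne_zero m.ne_zero,
        Finsupp.sup_apply]
      simp [le_max_left, le_max_right]
  · rintro ⟨h1, h2⟩ p
    show ((_ : ℕ) : ℕ∞) ≤ _
    rw [PNat.lcm_coe, Nat.factorization_lcm n.ne_zero m.ne_zero, Finsupp.sup_apply]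
    have : ((((n:ℕ).factorization p) ⊔ ((m:ℕ).factorization p) : ℕ) : ℕ∞)
        = ((n:ℕ).factorization p : ℕ∞) ⊔ ((m:ℕ).factorization p : ℕ∞) := by
      exact_mod_cast rfl
    rw [this]
    exact sup_le (h1 p) (h2 p)

lemma basis_lemma {U : Set Supernatural}
    (hU : TopologicalSpace.GenerateOpen
      {U | ∃ (n : ℕ+) (t : Supernatural), U = {x | natToSuper n ∣ x ∧ x ∣ t}} U) :
    ∀ s ∈ U, ∃ (n : ℕ+) (t : Supernatural), natToSuper n ∣ s ∧ s ∣ t ∧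
      {x | natToSuper n ∣ x ∧ x ∣ t} ⊆ U := by
  induction hU with
  | basic V hV =>
    obtain ⟨n, t, rfl⟩ := hV
    exact fun s hs => ⟨n, t, hs.1, hs.2, subset_rfl⟩
  | univ =>
    intro s _
    refine ⟨1, fun _ => ⊤, fun p => ?_, fun p => le_top, Set.subset_univ _⟩
    simp [natToSuper]
  | inter U V hU hV ihU ihV =>
    intro s hs
    obtain ⟨n, t, h1, h2, h3⟩ := ihU s hs.1
    obtain ⟨m, u, g1, g2, g3⟩ := ihV s hs.2
    refine ⟨n.lcm m, fun p => min (t p) (u p),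
      (natToSuper_lcm_dvd n m s).2 ⟨h1, g1⟩, fun p => le_min (h2 p) (g2 p), ?_⟩
    rintro x ⟨hx1, hx2⟩
    obtain ⟨hn, hm⟩ := (natToSuper_lcm_dvd n m x).1 hx1
    exact ⟨h3 ⟨hn, fun p => (hx2 p).trans (min_le_left _ _)⟩,
      g3 ⟨hm, fun p => (hx2 p).trans (min_le_right _ _)⟩⟩
  | sUnion 𝒮 h ih =>
    intro s hs
    obtain ⟨V, hV, hsV⟩ := hs
    obtain ⟨n, t, h1, h2, h3⟩ := ih V hV s hsV
    exact ⟨n, t, h1, h2, h3.trans (Set.subset_sUnion_of_mem hV)⟩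

theorem stmt4 (S : Set Supernatural) :
    IsClosed[pcfbTopology] S ↔
      ∀ s : Supernatural,
        (∀ n : ℕ+, natToSuper n ∣ s → ∃ x ∈ S, natToSuper n ∣ x ∧ x ∣ s) → s ∈ S := by
  rw [← @isOpen_compl_iff _ _ pcfbTopology]
  constructor
  · intro hS s hyp
    by_contra hsS
    obtain ⟨n, t, h1, h2, h3⟩ := basis_lemma hS s hsS
    obtain ⟨x, hxS, hnx, hxs⟩ := hyp n h1
    exact h3 ⟨hnx, fun p => (hxs p).trans (h2 p)⟩ hxS
  · intro hyp
    have key : Sᶜ = ⋃₀ {V | (∃ (n : ℕ+) (t : Supernatural),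
        V = {x | natToSuper n ∣ x ∧ x ∣ t}) ∧ V ⊆ Sᶜ} := by
      ext s
      constructor
      · intro hs
        have : ¬ ∀ n : ℕ+, natToSuper n ∣ s → ∃ x ∈ S, natToSuper n ∣ x ∧ x ∣ s :=
          fun h => hs (hyp s h)
        push_neg at this
        obtain ⟨n, hns, hno⟩ := this
        refine ⟨{x | natToSuper n ∣ x ∧ x ∣ s}, ⟨⟨n, s, rfl⟩, ?_⟩, hns, fun p => le_refl _⟩
        rintro x ⟨hx1, hx2⟩ hxS
        exact (hno x hxS hx1) hx2
      · rintro ⟨V, ⟨_, hVc⟩, hsV⟩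
        exact hVc hsV
    rw [key]
    exact TopologicalSpace.GenerateOpen.sUnion _ (fun V hV =>
      TopologicalSpace.GenerateOpen.basic _ hV.1)
end

section
/- The assignment S ↦ K_S is injective on pcfb-closed subsets: if S and S' are subsets of 𝕊, both closed in the pcfb-topology, and the Grothendieck topologies K_S and K_{S'} on the big cell 𝙳 coincide, then S = S'. -/
open Topology

open CategoryTheory

/-- The big cell: the category whose objects are the positive natural numbers, with a
unique morphism `m ⟶ n` whenever `n ∣ m` (the opposite of the divisibility poset). -/
def BigCell : Type := ℕ+

/-- The underlying positive natural number of an object of the big cell. -/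
def BigCell.d : BigCell → ℕ+ := fun x => x

/-- The object of the big cell corresponding to a positive natural number. -/
def BigCell.of : ℕ+ → BigCell := fun x => x

/-- `m ≤ n` in the big cell iff `n ∣ m`; the induced category has a unique
morphism `m ⟶ n` whenever `n ∣ m`. -/
instance : Preorder BigCell where
  le m n := n.d ∣ m.d
  le_refl _ := dvd_refl _
  le_trans _ _ _ hab hbc := dvd_trans hbc hab

lemma natToSuper_dvd {a b : ℕ+} (h : a ∣ b) : natToSuper a ∣ natToSuper b := by
  intro p
  have := (Nat.factorization_le_iff_dvd a.ne_zero b.ne_zero).2 (PNat.dvd_iff.1 h)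
  simp only [natToSuper]
  exact_mod_cast this p

lemma natToSuper_lcm_dvd_s8 {a b : ℕ+} {x : Supernatural} :
    natToSuper (PNat.lcm a b) ∣ x ↔ natToSuper a ∣ x ∧ natToSuper b ∣ x := by
  have key : ∀ p : Nat.Primes, natToSuper (PNat.lcm a b) p =
      max (natToSuper a p) (natToSuper b p) := by
    intro p
    simp only [natToSuper, PNat.lcm_coe,
      Nat.factorization_lcm a.ne_zero b.ne_zero]
    rw [Finsupp.sup_apply]
    rcases le_total ((a : ℕ).factorization p) ((b : ℕ).factorization p) with hle | hle
    · rw [max_eq_right hle, max_eq_right (by exact_mod_cast hle)]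
    · rw [max_eq_left hle, max_eq_left (by exact_mod_cast hle)]
  constructor
  · intro h
    exact ⟨fun p => le_trans (by rw [key p]; exact le_max_left _ _) (h p),
      fun p => le_trans (by rw [key p]; exact le_max_right _ _) (h p)⟩
  · rintro ⟨h1, h2⟩ p
    rw [key p]
    exact max_le (h1 p) (h2 p)

/-- Points of a generated-open set lie in a basic open set contained in it. -/
lemma exists_basic {O : Set Supernatural} (hO : pcfbTopology.IsOpen O)
    {s : Supernatural} (hs : s ∈ O) :
    ∃ (n : ℕ+) (t : Supernatural), (natToSuper n ∣ s ∧ s ∣ t) ∧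
      {x | natToSuper n ∣ x ∧ x ∣ t} ⊆ O := by
  induction hO with
  | basic U hU =>
    obtain ⟨n, t, rfl⟩ := hU
    exact ⟨n, t, hs, subset_rfl⟩
  | univ =>
    refine ⟨1, fun _ => ⊤, ⟨fun p => ?_, fun p => le_top⟩, fun _ _ => trivial⟩
    simp [natToSuper]
  | inter U V hU hV ihU ihV =>
    obtain ⟨n1, t1, ⟨hn1, ht1⟩, hsub1⟩ := ihU hs.1
    obtain ⟨n2, t2, ⟨hn2, ht2⟩, hsub2⟩ := ihV hs.2
    refine ⟨PNat.lcm n1 n2, fun p => min (t1 p) (t2 p),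
      ⟨natToSuper_lcm_dvd_s8.2 ⟨hn1, hn2⟩, fun p => le_min (ht1 p) (ht2 p)⟩, ?_⟩
    rintro x ⟨hx1, hx2⟩
    obtain ⟨hxa, hxb⟩ := natToSuper_lcm_dvd_s8.1 hx1
    exact ⟨hsub1 ⟨hxa, fun p => le_trans (hx2 p) (min_le_left _ _)⟩,
      hsub2 ⟨hxb, fun p => le_trans (hx2 p) (min_le_right _ _)⟩⟩
  | sUnion 𝒮 h ih =>
    obtain ⟨U, hU, hsU⟩ := hs
    obtain ⟨n, t, hmem, hsub⟩ := ih U hU hsU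
    exact ⟨n, t, hmem, hsub.trans (Set.subset_sUnion_of_mem hU)⟩

/-- The key one-sided inclusion. -/
lemma aux_subset (S S' : Set Supernatural)
    (hS : IsClosed[pcfbTopology] S)
    (J J' : GrothendieckTopology BigCell)
    (hJ : ∀ (n : BigCell) (L : Sieve n),
      L ∈ J.sieves n ↔ ∀ s ∈ S, natToSuper n.d ∣ s →
        ∃ (m : BigCell) (f : m ⟶ n), L.arrows f ∧ natToSuper m.d ∣ s)
    (hJ' : ∀ (n : BigCell) (L : Sieve n),
      L ∈ J'.sieves n ↔ ∀ s ∈ S', natToSuper n.d ∣ s →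
        ∃ (m : BigCell) (f : m ⟶ n), L.arrows f ∧ natToSuper m.d ∣ s)
    (h : J = J') : S' ⊆ S := by
  intro s hs
  by_contra hns
  -- find a basic open set around s disjoint from S
  obtain ⟨n, t, ⟨hns0, hst⟩, hsub⟩ := exists_basic hS.isOpen_compl hns
  -- the sieve of m with natToSuper m ∤ t
  set L : Sieve (BigCell.of n) :=
    { arrows := fun m _ => ¬ natToSuper m.d ∣ t
      downward_closed := by
        intro Y Z f hf g hg
        exact hf (fun p => le_trans (natToSuper_dvd g.le p) (hg p)) }
  -- L is a covering sieve for J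
  have hLJ : L ∈ J.sieves (BigCell.of n) := by
    rw [hJ]
    intro u hu hnu
    -- u ∉ basic set, but natToSuper n ∣ u, hence ¬ u ∣ t
    have hut : ¬ u ∣ t := by
      intro hut
      exact hsub ⟨hnu, hut⟩ hu
    obtain ⟨p, hp⟩ : ∃ p, ¬ u p ≤ t p := by
      by_contra hc
      push_neg at hc
      exact hut hc
    push_neg at hp
    -- t p is finite
    obtain ⟨a, ha⟩ : ∃ a : ℕ, t p = (a : ℕ∞) := by
      cases htp : t p with
      | top => exact absurd (htp ▸ hp) (by simp)
      | coe a => exact ⟨a, rfl⟩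
    set k := a + 1
    have hku : (k : ℕ∞) ≤ u p := by
      have : t p + 1 ≤ u p := Order.add_one_le_of_lt hp
      rw [ha] at this
      exact_mod_cast this
    -- m := lcm n (p ^ k)
    set pk : ℕ+ := ⟨(p : ℕ) ^ k, pow_pos p.2.pos k⟩
    set m : ℕ+ := PNat.lcm n pk
    have hpk : ∀ q : Nat.Primes, natToSuper pk q = if (q : ℕ) = (p : ℕ) then (k : ℕ∞) else 0 := by
      intro q
      have hco : ((pk : ℕ+) : ℕ) = (p : ℕ) ^ k := rfl
      rcases eq_or_ne (q : ℕ) (p : ℕ) with hqp | hqp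
      · simp [natToSuper, hco, Nat.Prime.factorization_pow p.2, Finsupp.single_apply, hqp]
      · simp [natToSuper, hco, Nat.Prime.factorization_pow p.2, Finsupp.single_apply,
          hqp, Ne.symm hqp]
    have hmu : natToSuper m ∣ u := by
      rw [natToSuper_lcm_dvd_s8]
      refine ⟨hnu, fun q => ?_⟩
      rw [hpk q]
      split
      · rename_i hq
        have : q = p := Subtype.ext hq
        rw [this]; exact hku
      · exact zero_le
    have hmL : ¬ natToSuper m ∣ t := by
      intro hmt
      have h1 : natToSuper pk ∣ t := (natToSuper_lcm_dvd_s8.1 hmt).2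
      have h2 := h1 p
      rw [hpk p, if_pos rfl, ha] at h2
      exact absurd (by exact_mod_cast h2) (by omega)
    have hle : (BigCell.of m) ≤ (BigCell.of n) := PNat.dvd_lcm_left n pk
    exact ⟨BigCell.of m, homOfLE hle, hmL, hmu⟩
  -- but L is not a covering sieve for J'
  have hLJ' : L ∉ J'.sieves (BigCell.of n) := by
    rw [hJ']
    push_neg
    refine ⟨s, hs, hns0, ?_⟩
    intro m f hL hms
    exact hL (fun p => le_trans (hms p) (hst p))
  exact hLJ' (h ▸ hLJ)

theorem stmt8 (S S' : Set Supernatural)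
    (hS : IsClosed[pcfbTopology] S) (hS' : IsClosed[pcfbTopology] S')
    (J J' : GrothendieckTopology BigCell)
    (hJ : ∀ (n : BigCell) (L : Sieve n),
      L ∈ J.sieves n ↔ ∀ s ∈ S, natToSuper n.d ∣ s →
        ∃ (m : BigCell) (f : m ⟶ n), L.arrows f ∧ natToSuper m.d ∣ s)
    (hJ' : ∀ (n : BigCell) (L : Sieve n),
      L ∈ J'.sieves n ↔ ∀ s ∈ S', natToSuper n.d ∣ s →
        ∃ (m : BigCell) (f : m ⟶ n), L.arrows f ∧ natToSuper m.d ∣ s)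
    (h : J = J') : S = S' := by
  apply Set.Subset.antisymm
  · exact aux_subset S' S hS' J' J hJ' hJ h.symm
  · exact aux_subset S S' hS J J' hJ hJ' h
end

section
/- Let S ⊆ 𝕊 be closed in the pcfb-topology and let K_S be the associated Grothendieck topology on the big cell 𝙳. Then the following are equivalent: (1) every K_S-covering sieve on any object n contains a finitely generated K_S-covering sieve (i.e., one generated by finitely many morphisms); (2) for every positive natural number n, the set {s ∈ S : n ∣ s} is compact in the subspace topology induced by the localic topology on 𝕊. -/
open Topology

/-- The localic topology on `𝕊`, generated by the open sets `(n) = {s : n ∣ s}`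
for `n` a positive natural number. -/
def localicTopology : TopologicalSpace Supernatural :=
  .generateFrom {U | ∃ n : ℕ+, U = {s | natToSuper n ∣ s}}

attribute [instance] localicTopology

open CategoryTheory

/-- The sieve on `n` generated by the finitely many positive natural numbers in `F`:
it contains a multiple `m` of `n` iff `m` is a multiple of some element of `F`.
The finitely generated sieves on `n` are exactly the sieves of this form. -/
def genSieve (n : BigCell) (F : Finset ℕ+) : Sieve n where
  arrows m _ := ∃ m₀ ∈ F, m₀ ∣ m.d
  downward_closed := by
    rintro Y Z f ⟨m₀, hm₀, hdvd⟩ g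
    exact ⟨m₀, hm₀, dvd_trans hdvd (leOfHom g)⟩

section Helpers

lemma superDvd_trans {a b c : Supernatural} (h1 : a ∣ b) (h2 : b ∣ c) : a ∣ c :=
  fun p => le_trans (h1 p) (h2 p)

lemma natToSuper_dvd_s11 {m n : ℕ+} (h : m ∣ n) : natToSuper m ∣ natToSuper n := by
  intro p
  have h2 : (m : ℕ).factorization ≤ (n : ℕ).factorization :=
    (Nat.factorization_le_iff_dvd m.ne_zero n.ne_zero).mpr (PNat.dvd_iff.mp h)
  show ((m : ℕ).factorization p : ℕ∞) ≤ ((n : ℕ).factorization p : ℕ∞)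
  exact_mod_cast h2 p

lemma natToSuper_lcm_dvd_iff {a b : ℕ+} {s : Supernatural} :
    natToSuper (PNat.lcm a b) ∣ s ↔ natToSuper a ∣ s ∧ natToSuper b ∣ s := by
  constructor
  · intro h
    exact ⟨superDvd_trans (natToSuper_dvd_s11 (PNat.dvd_lcm_left a b)) h,
      superDvd_trans (natToSuper_dvd_s11 (PNat.dvd_lcm_right a b)) h⟩
  · rintro ⟨h1, h2⟩ p
    have hf : ((PNat.lcm a b : ℕ)).factorization p
        = max ((a : ℕ).factorization p) ((b : ℕ).factorization p) := by
      rw [PNat.lcm_coe, Nat.factorization_lcm a.ne_zero b.ne_zero]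
      exact Finsupp.sup_apply _ _ _
    show (((PNat.lcm a b : ℕ)).factorization p : ℕ∞) ≤ s p
    rw [hf, Nat.mono_cast.map_max]
    exact max_le (h1 p) (h2 p)

lemma one_dvd_super (s : Supernatural) : natToSuper 1 ∣ s := by
  intro p
  show ((((1 : ℕ+) : ℕ)).factorization p : ℕ∞) ≤ s p
  simp

/-- The basic open set `(m)` of the localic topology. -/
def Dn (m : ℕ+) : Set Supernatural := {s | natToSuper m ∣ s}

lemma isOpen_Dn (m : ℕ+) : IsOpen (Dn m) := by
  show TopologicalSpace.GenerateOpen _ (Dn m)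
  exact .basic _ ⟨m, rfl⟩

lemma exists_Dn_subset' {u : Set Supernatural}
    (hu : TopologicalSpace.GenerateOpen {U | ∃ n : ℕ+, U = {s | natToSuper n ∣ s}} u) :
    ∀ a ∈ u, ∃ m : ℕ+, natToSuper m ∣ a ∧ Dn m ⊆ u := by
  induction hu with
  | basic U hU =>
      rintro a ha
      obtain ⟨m, rfl⟩ := hU
      exact ⟨m, ha, subset_rfl⟩
  | univ => exact fun a _ => ⟨1, one_dvd_super a, fun _ _ => trivial⟩
  | inter u v _ _ ihu ihv =>
      rintro a ⟨hau, hav⟩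
      obtain ⟨m₁, hm1, hs1⟩ := ihu a hau
      obtain ⟨m₂, hm2, hs2⟩ := ihv a hav
      refine ⟨PNat.lcm m₁ m₂, natToSuper_lcm_dvd_iff.mpr ⟨hm1, hm2⟩, fun x hx => ?_⟩
      obtain ⟨hx1, hx2⟩ := natToSuper_lcm_dvd_iff.mp hx
      exact ⟨hs1 hx1, hs2 hx2⟩
  | sUnion Us _ ih =>
      rintro a ⟨u', hu', ha⟩
      obtain ⟨m, hm, hsub⟩ := ih u' hu' a ha
      exact ⟨m, hm, fun x hx => ⟨u', hu', hsub hx⟩⟩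

lemma exists_Dn_subset {u : Set Supernatural} (hu : IsOpen u) :
    ∀ a ∈ u, ∃ m : ℕ+, natToSuper m ∣ a ∧ Dn m ⊆ u :=
  exists_Dn_subset' hu

end Helpers

lemma BigCell.le_of_dvd {m n : ℕ+} (h : n ∣ m) : BigCell.of m ≤ BigCell.of n := h

lemma BigCell.le_of_dvd' {m : BigCell} {n : ℕ+} (h : n ∣ m.d) : m ≤ BigCell.of n := h

/-- The morphism of the big cell induced by divisibility. -/
def BigCell.homOf {m n : ℕ+} (h : n ∣ m) : BigCell.of m ⟶ BigCell.of n :=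
  homOfLE (BigCell.le_of_dvd h)
theorem stmt11 (S : Set Supernatural) (hS : IsClosed[pcfbTopology] S)
    (J : GrothendieckTopology BigCell)
    (hJ : ∀ (n : BigCell) (L : Sieve n),
      L ∈ J.sieves n ↔ ∀ s ∈ S, natToSuper n.d ∣ s →
        ∃ (m : BigCell) (f : m ⟶ n), L.arrows f ∧ natToSuper m.d ∣ s) :
    (∀ (n : BigCell) (L : Sieve n), L ∈ J.sieves n →
        ∃ F : Finset ℕ+, genSieve n F ≤ L ∧ genSieve n F ∈ J.sieves n) ↔
      ∀ n : ℕ+, IsCompact {x : S | natToSuper n ∣ (x : Supernatural)} := by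
  have key : ∀ n : ℕ+, (Subtype.val '' {x : S | natToSuper n ∣ (x : Supernatural)})
      = {x | x ∈ S ∧ natToSuper n ∣ x} := by
    intro n
    ext x
    constructor
    · rintro ⟨⟨y, hyS⟩, hy, rfl⟩
      exact ⟨hyS, hy⟩
    · rintro ⟨hxS, hx⟩
      exact ⟨⟨x, hxS⟩, hx, rfl⟩
  classical
  constructor
  · -- finitely generated covers ⇒ compactness
    intro hfg n
    rw [Subtype.isCompact_iff, key n]
    apply isCompact_of_finite_subcover
    intro ι U hUopen hcover
    have hch : ∀ x : {x : Supernatural // x ∈ S ∧ natToSuper n ∣ x},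
        ∃ (m : ℕ+) (i : ι), natToSuper m ∣ (x : Supernatural) ∧ Dn m ⊆ U i := by
      intro x
      obtain ⟨i, hi⟩ := Set.mem_iUnion.mp (hcover x.2)
      obtain ⟨m, hm, hsub⟩ := exists_Dn_subset (hUopen i) x hi
      exact ⟨m, i, hm, hsub⟩
    choose mf idx hmf hsubf using hch
    set L : Sieve (BigCell.of n) :=
      { arrows := fun m' _ => ∃ x, (mf x : ℕ+) ∣ BigCell.d m'
        downward_closed := by
          rintro Y Z f ⟨x, hx⟩ g
          exact ⟨x, dvd_trans hx (leOfHom g)⟩ } with hLdef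
    have hLJ : L ∈ J.sieves (BigCell.of n) := by
      rw [hJ]
      intro s hs hns
      set x : {x : Supernatural // x ∈ S ∧ natToSuper n ∣ x} := ⟨s, hs, hns⟩ with hx
      refine ⟨BigCell.of (PNat.lcm n (mf x)),
        BigCell.homOf (PNat.dvd_lcm_left n (mf x)),
        ⟨x, PNat.dvd_lcm_right n (mf x)⟩, ?_⟩
      exact natToSuper_lcm_dvd_iff.mpr ⟨hns, hmf x⟩
    obtain ⟨F, hFle, hFJ⟩ := hfg _ L hLJ
    have hwit : ∀ m₀ ∈ F, ∃ x, (mf x : ℕ+) ∣ PNat.lcm n m₀ := by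
      intro m₀ hm₀
      have harr : (genSieve (BigCell.of n) F).arrows
          (BigCell.homOf (PNat.dvd_lcm_left n m₀)) :=
        ⟨m₀, hm₀, PNat.dvd_lcm_right n m₀⟩
      exact hFle _ harr
    choose wit hwit' using hwit
    refine ⟨F.attach.image (fun m₀ : {x // x ∈ F} => idx (wit m₀.1 m₀.2)), ?_⟩
    intro s hsK
    obtain ⟨m', f, ⟨m₀, hm₀F, hm₀dvd⟩, hm's⟩ := (hJ _ _).mp hFJ s hsK.1 hsK.2
    have hnm' : (n : ℕ+) ∣ BigCell.d m' := leOfHom f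
    have hlcm : PNat.lcm n m₀ ∣ BigCell.d m' := PNat.lcm_dvd hnm' hm₀dvd
    have hdvds : natToSuper (mf (wit m₀ hm₀F)) ∣ s :=
      superDvd_trans (natToSuper_dvd_s11 (dvd_trans (hwit' m₀ hm₀F) hlcm)) hm's
    have hsU : s ∈ U (idx (wit m₀ hm₀F)) := hsubf _ hdvds
    exact Set.mem_iUnion₂.mpr ⟨idx (wit m₀ hm₀F),
      Finset.mem_image.mpr ⟨⟨m₀, hm₀F⟩, Finset.mem_attach _ _, rfl⟩, hsU⟩
  · -- compactness ⇒ finitely generated covers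
    intro hcomp n L hL
    have hK := hcomp n.d
    rw [Subtype.isCompact_iff, key n.d] at hK
    have hcover : {x | x ∈ S ∧ natToSuper n.d ∣ x}
        ⊆ ⋃ i : {m' : ℕ+ // ∃ f : (BigCell.of m') ⟶ n, L.arrows f}, Dn i.1 := by
      intro s hs
      obtain ⟨m, f, hLf, hms⟩ := (hJ n L).mp hL s hs.1 hs.2
      exact Set.mem_iUnion.mpr ⟨⟨BigCell.d m, f, hLf⟩, hms⟩
    obtain ⟨t, ht⟩ := hK.elim_finite_subcover
      (fun i : {m' : ℕ+ // ∃ f : (BigCell.of m') ⟶ n, L.arrows f} => Dn i.1)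
      (fun i => isOpen_Dn i.1) hcover
    refine ⟨t.image Subtype.val, ?_, ?_⟩
    · rintro m' f ⟨m₀, hm₀, hdvd⟩
      obtain ⟨i, hit, hival⟩ := Finset.mem_image.mp hm₀
      obtain ⟨f₀, hf₀⟩ := i.2
      have g : m' ⟶ BigCell.of i.1 :=
        homOfLE (BigCell.le_of_dvd' (hival ▸ hdvd))
      have hgf := L.downward_closed hf₀ g
      have heq : g ≫ f₀ = f := Subsingleton.elim _ _
      rwa [heq] at hgf
    · rw [hJ]
      intro s hs hns
      obtain ⟨i, hit, hsi⟩ := Set.mem_iUnion₂.mp (ht ⟨hs, hns⟩)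
      obtain ⟨f₀, hf₀⟩ := i.2
      exact ⟨BigCell.of i.1, f₀,
        ⟨i.1, Finset.mem_image_of_mem _ hit, dvd_refl _⟩, hsi⟩
end
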